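/- Let d ≥ 2 be an even integer and let (φ_d) be the Chebyshev polynomials of the first kind. Let K be a field, x ∈ K nonzero, and set u = x + x⁻¹, v = y·(x+1)·x^{−(1+d/2)} for any y ∈ K with y² = x·(x^{2d} + 1). Then v² = (u + 2)·φ_d(u). Equivalently, x·(x^{2d}+1)·(x+1)²·x^{−(2+d)} = (u+2)·φ_d(u). -/

import Mathlib

open Polynomial

/-- The Chebyshev polynomials of the first kind `φ_d ∈ ℤ[X]`, normalized so that
`φ_0 = 2`, `φ_1 = X`, `φ_{d+2} = X·φ_{d+1} - φ_d`. -/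
noncomputable def chebPhi : ℕ → Polynomial ℤ
  | 0 => 2
  | 1 => X
  | (n + 2) => X * chebPhi (n + 1) - chebPhi n

lemma chebPhi_eval {K : Type*} [Field K] (x : K) (hx : x ≠ 0) :
    ∀ n : ℕ, Polynomial.aeval (x + x⁻¹) (chebPhi n) = x ^ n + (x⁻¹) ^ n
  | 0 => by simp [chebPhi, map_ofNat]; norm_num
  | 1 => by simp [chebPhi]
  | (n + 2) => by
    have h1 := chebPhi_eval x hx (n + 1)
    have h0 := chebPhi_eval x hx n
    simp only [chebPhi, map_sub, map_mul, aeval_X, h1, h0]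
    have hx' : x⁻¹ ≠ 0 := inv_ne_zero hx
    simp only [inv_pow]
    field_simp
    ring

/-- For even `d ≥ 2`: with `u = x + x⁻¹` and `v = y(x+1)x^{-(1+d/2)}` where
`y² = x(x^{2d}+1)`, one has `v² = (u+2)φ_d(u)`; equivalently
`x(x^{2d}+1)(x+1)²x^{-(2+d)} = (u+2)φ_d(u)`. -/
theorem stmt12 (d : ℕ) (hd : 2 ≤ d) (hdev : Even d) (K : Type*) [Field K]
    (x : K) (hx : x ≠ 0) (u : K) (hu : u = x + x⁻¹) :
    (∀ y v : K, y ^ 2 = x * (x ^ (2 * d) + 1) → v = y * (x + 1) * (x ^ (1 + d / 2))⁻¹ →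
      v ^ 2 = (u + 2) * Polynomial.aeval u (chebPhi d)) ∧
    x * (x ^ (2 * d) + 1) * (x + 1) ^ 2 * (x ^ (2 + d))⁻¹ =
      (u + 2) * Polynomial.aeval u (chebPhi d) := by
  obtain ⟨k, hk⟩ := hdev
  have hd2 : d = 2 * k := by omega
  have hdiv : d / 2 = k := by omega
  have key : x * (x ^ (2 * d) + 1) * (x + 1) ^ 2 * (x ^ (2 + d))⁻¹ =
      (u + 2) * Polynomial.aeval u (chebPhi d) := by
    rw [hu, chebPhi_eval x hx d, hd2]
    have hx' : x⁻¹ ≠ 0 := inv_ne_zero hx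
    simp only [inv_pow]
    field_simp
    ring
  refine ⟨fun y v hy hv => ?_, key⟩
  rw [← key, hv, hdiv, mul_pow, mul_pow, hy, ← inv_pow, ← pow_mul]
  congr 2
  rw [inv_pow]
  have h2 : (1 + k) * 2 = 2 + d := by omega
  rw [h2]
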